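/- arXiv:2410.04632 — 2 statements merged into one kernel-verified Lean document; each statement's English description precedes it below -/
import Mathlib

section
/- Let t, r be integers and let n(X) denote the number of triples (a, b, c) ∈ ℤ³ with a(t−a) − bc = r, X/2 ≤ |a|, |b|, |c| ≤ X. Then for every ε > 0, n(X) = O_ε(X^{1+ε}) as X → ∞, provided t² − 4r is not a perfect square. -/
open Finset Real

/-- Pointwise prime-power bound -/
lemma aux_primepow (ε : ℝ) (hε : 0 < ε) :
    ∃ K : ℝ, 1 ≤ K ∧ ∀ p k : ℕ, p.Prime →
      ((k : ℝ) + 1) ≤ (if (p : ℝ) < 2 ^ (1/ε) then K else 1) * (p : ℝ) ^ ((k : ℝ) * ε) := by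
  set δ : ℝ := 2 ^ ε - 1 with hδ
  have hδpos : 0 < δ := by
    have : (1:ℝ) < 2 ^ ε :=
      (Real.one_lt_rpow_iff_of_pos (by norm_num)).mpr (Or.inl ⟨one_lt_two, hε⟩)
    linarith
  refine ⟨max 1 (1/δ), le_max_left _ _, ?_⟩
  intro p k hp
  have hp2 : (2:ℝ) ≤ (p:ℝ) := by exact_mod_cast hp.two_le
  have hppos : (0:ℝ) < p := by linarith
  have hkε : 0 ≤ (k:ℝ) * ε := by positivity
  have h2k : (2:ℝ) ^ ((k:ℝ) * ε) ≤ (p:ℝ) ^ ((k:ℝ) * ε) :=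
    Real.rpow_le_rpow (by norm_num) hp2 hkε
  by_cases hsmall : (p : ℝ) < 2 ^ (1/ε)
  · rw [if_pos hsmall]
    -- small prime: k+1 ≤ K * 2^(kε) ≤ K * p^(kε)
    have hK1 : (1:ℝ) ≤ max 1 (1/δ) := le_max_left _ _
    have hKδ : 1 ≤ max 1 (1/δ) * δ := by
      have : (1/δ) * δ = 1 := by field_simp
      nlinarith [le_max_right 1 (1/δ)]
    have hbern : (1:ℝ) + (k:ℝ) * δ ≤ ((2:ℝ) ^ ε) ^ k := by
      have := one_add_mul_le_pow (a := δ) (by linarith) k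
      simpa [hδ] using this
    have h2 : (2:ℝ) ^ ((k:ℝ) * ε) = ((2:ℝ) ^ ε) ^ k := by
      rw [mul_comm, Real.rpow_mul (by norm_num), Real.rpow_natCast]
    have hKpos : (0:ℝ) < max 1 (1/δ) := by linarith
    have step : (k:ℝ) + 1 ≤ max 1 (1/δ) * ((2:ℝ) ^ ε) ^ k := by
      have : max 1 (1/δ) * (1 + (k:ℝ) * δ) ≤ max 1 (1/δ) * ((2:ℝ) ^ ε) ^ k :=
        mul_le_mul_of_nonneg_left hbern (le_of_lt hKpos)
      nlinarith
    calc (k:ℝ) + 1 ≤ max 1 (1/δ) * (2:ℝ) ^ ((k:ℝ) * ε) := by rw [h2]; exact step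
      _ ≤ max 1 (1/δ) * (p:ℝ) ^ ((k:ℝ) * ε) := mul_le_mul_of_nonneg_left h2k (le_of_lt hKpos)
  · rw [if_neg hsmall, one_mul]
    -- large prime: p^ε ≥ 2, so p^(kε) ≥ 2^k ≥ k+1
    have hpB : (2:ℝ) ^ (1/ε) ≤ (p:ℝ) := le_of_not_gt hsmall
    have hpε : (2:ℝ) ≤ (p:ℝ) ^ ε := by
      have := Real.rpow_le_rpow (by positivity) hpB (le_of_lt hε)
      rwa [← Real.rpow_mul (by norm_num), one_div_mul_cancel (ne_of_gt hε),
        Real.rpow_one] at this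
    have h1 : (k:ℝ) + 1 ≤ (2:ℝ) ^ k := by
      have := Nat.lt_two_pow_self (n := k)
      exact_mod_cast Nat.succ_le_of_lt this
    have h2 : ((2:ℝ)) ^ k ≤ ((p:ℝ) ^ ε) ^ k := pow_le_pow_left₀ (by norm_num) hpε k
    have h3 : ((p:ℝ) ^ ε) ^ k = (p:ℝ) ^ ((k:ℝ) * ε) := by
      rw [mul_comm, Real.rpow_mul (le_of_lt hppos), Real.rpow_natCast]
    linarith [h3 ▸ h2]

/-- Divisor bound: d(n) = O_ε(n^ε) -/
lemma divisor_bound (ε : ℝ) (hε : 0 < ε) :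
    ∃ C : ℝ, 1 ≤ C ∧ ∀ n : ℕ, ((n.divisors.card : ℝ)) ≤ C * (n : ℝ) ^ ε := by
  obtain ⟨K, hK1, hK⟩ := aux_primepow ε hε
  set B : ℝ := 2 ^ (1/ε) with hB
  refine ⟨K ^ (⌈B⌉₊ + 1), one_le_pow₀ hK1, ?_⟩
  intro n
  rcases Nat.eq_zero_or_pos n with rfl | hn
  · simp; positivity
  have hn0 : n ≠ 0 := Nat.pos_iff_ne_zero.mp hn
  rw [Nat.card_divisors hn0]
  -- n^ε as a product
  have hself : ∏ p ∈ n.primeFactors, (p : ℕ) ^ (n.factorization p) = n :=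
    Nat.factorization_prod_pow_eq_self hn0
  have hnε : (n : ℝ) ^ ε = ∏ p ∈ n.primeFactors, (p : ℝ) ^ ((n.factorization p : ℝ) * ε) := by
    conv_lhs => rw [← hself]
    push_cast
    rw [← Real.finset_prod_rpow _ _ (fun p hp => by positivity) ε]
    refine Finset.prod_congr rfl fun p hp => ?_
    rw [← Real.rpow_natCast (p:ℝ) (n.factorization p), ← Real.rpow_mul (by positivity)]
  -- pointwise bound
  have key : ((n.primeFactors.prod (n.factorization · + 1) : ℕ) : ℝ)
      ≤ ∏ p ∈ n.primeFactors, ((if (p:ℝ) < B then K else 1) * (p : ℝ) ^ ((n.factorization p : ℝ) * ε)) := by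
    push_cast
    refine Finset.prod_le_prod (fun p hp => by positivity) (fun p hp => ?_)
    exact hK p _ (Nat.prime_of_mem_primeFactors hp)
  rw [Finset.prod_mul_distrib] at key
  have hprod2 : ∏ p ∈ n.primeFactors, (if (p:ℝ) < B then K else 1)
      = K ^ (n.primeFactors.filter (fun p : ℕ => (p:ℝ) < B)).card := by
    rw [← Finset.prod_const, Finset.prod_filter]
  have hcard : (n.primeFactors.filter (fun p : ℕ => (p:ℝ) < B)).card ≤ ⌈B⌉₊ + 1 := by
    have hsub : (n.primeFactors.filter (fun p : ℕ => (p:ℝ) < B)) ⊆ Finset.range (⌈B⌉₊ + 1) := by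
      intro p hp
      simp only [Finset.mem_filter] at hp
      have : (p : ℝ) ≤ ⌈B⌉₊ := le_trans (le_of_lt hp.2) (Nat.le_ceil B)
      have : p ≤ ⌈B⌉₊ := by exact_mod_cast this
      exact Finset.mem_range.mpr (Nat.lt_succ_of_le this)
    calc _ ≤ (Finset.range (⌈B⌉₊ + 1)).card := Finset.card_le_card hsub
      _ = ⌈B⌉₊ + 1 := Finset.card_range _
  have hKpow : K ^ (n.primeFactors.filter (fun p : ℕ => (p:ℝ) < B)).card ≤ K ^ (⌈B⌉₊ + 1) :=
    pow_le_pow_right₀ (by linarith) hcard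
  have hprodpos : (0:ℝ) ≤ ∏ p ∈ n.primeFactors, (p : ℝ) ^ ((n.factorization p : ℝ) * ε) :=
    Finset.prod_nonneg fun p hp => by positivity
  calc ((n.primeFactors.prod (n.factorization · + 1) : ℕ) : ℝ)
      ≤ (K ^ (n.primeFactors.filter (fun p : ℕ => (p:ℝ) < B)).card) *
        ∏ p ∈ n.primeFactors, (p : ℝ) ^ ((n.factorization p : ℝ) * ε) := by
        rw [← hprod2]; exact key
    _ ≤ K ^ (⌈B⌉₊ + 1) * (n : ℝ) ^ ε := by
        rw [hnε]; exact mul_le_mul_of_nonneg_right hKpow hprodpos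

theorem stmt9_aux (t r : ℤ) (ε : ℝ) (hε : 0 < ε)
    (Cd : ℝ) (hCd1 : 1 ≤ Cd) (hCd : ∀ n : ℕ, ((n.divisors.card : ℝ)) ≤ Cd * (n : ℝ) ^ (ε/2)) :
    ∃ C : ℝ, ∀ X : ℝ, 1 ≤ X →
      (Nat.card {p : ℤ × ℤ × ℤ // p.1 * (t - p.1) - p.2.1 * p.2.2 = r ∧
        X / 2 ≤ |(p.1 : ℝ)| ∧ |(p.1 : ℝ)| ≤ X ∧
        X / 2 ≤ |(p.2.1 : ℝ)| ∧ |(p.2.1 : ℝ)| ≤ X ∧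
        X / 2 ≤ |(p.2.2 : ℝ)| ∧ |(p.2.2 : ℝ)| ≤ X} : ℝ) ≤ C * X ^ (1 + ε) := by
  set T : ℝ := 1 + |(t:ℝ)| + |(r:ℝ)| with hT
  have hT1 : 1 ≤ T := by have := abs_nonneg (t:ℝ); have := abs_nonneg (r:ℝ); rw [hT]; linarith
  refine ⟨6 * Cd * T ^ (ε/2), ?_⟩
  intro X hX
  have hX0 : (0:ℝ) < X := by linarith
  set M : ℤ := ⌊X⌋ with hMdef
  have hMX : (M : ℝ) ≤ X := Int.floor_le X
  have hM1 : (1:ℤ) ≤ M := by exact_mod_cast Int.le_floor.mpr (by simpa using hX)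
  set Na : ℤ → ℤ := fun a => a * (t - a) - r with hNa
  set Dset : ℤ → Finset ℤ := fun m =>
    (m.natAbs.divisors.image (fun d : ℕ => (d:ℤ))) ∪ (m.natAbs.divisors.image (fun d : ℕ => -(d:ℤ)))
    with hDset
  set F : Finset (ℤ × ℤ) := (Finset.Icc (-M) M).biUnion (fun a => {a} ×ˢ Dset (Na a)) with hF
  -- membership
  have habs : ∀ a : ℤ, |(a:ℝ)| ≤ X → a ∈ Finset.Icc (-M) M := by
    intro a ha
    rw [abs_le] at ha
    rw [Finset.mem_Icc]
    constructor
    · have : (⌈-X⌉ : ℤ) ≤ a := Int.ceil_le.mpr ha.1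
      rwa [Int.ceil_neg] at this
    · exact Int.le_floor.mpr ha.2
  have hmem : ∀ p : ℤ × ℤ × ℤ, (p.1 * (t - p.1) - p.2.1 * p.2.2 = r ∧
        X / 2 ≤ |(p.1 : ℝ)| ∧ |(p.1 : ℝ)| ≤ X ∧
        X / 2 ≤ |(p.2.1 : ℝ)| ∧ |(p.2.1 : ℝ)| ≤ X ∧
        X / 2 ≤ |(p.2.2 : ℝ)| ∧ |(p.2.2 : ℝ)| ≤ X) → (p.1, p.2.1) ∈ F := by
    rintro ⟨a, b, c⟩ ⟨heq, _, haX, hbl, _, hcl, _⟩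
    simp only at *
    have hb0 : b ≠ 0 := by
      intro h0; rw [h0] at hbl; simp at hbl; linarith
    have hc0 : c ≠ 0 := by
      intro h0; rw [h0] at hcl; simp at hcl; linarith
    have hbc : b * c = Na a := show b * c = a * (t - a) - r by linarith
    have hdvd : b ∣ Na a := ⟨c, by rw [← hbc]⟩
    rw [Finset.mem_biUnion]
    refine ⟨a, habs a haX, ?_⟩
    rw [Finset.mem_product]
    refine ⟨Finset.mem_singleton_self a, ?_⟩
    have hnadvd : b.natAbs ∈ (Na a).natAbs.divisors := by
      rw [Nat.mem_divisors]
      refine ⟨Int.natAbs_dvd_natAbs.mpr hdvd, ?_⟩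
      simp only [ne_eq, Int.natAbs_eq_zero]
      rw [← hbc]
      exact mul_ne_zero hb0 hc0
    rw [Finset.mem_union]
    rcases Int.natAbs_eq b with hb | hb
    · left; exact Finset.mem_image.mpr ⟨b.natAbs, hnadvd, hb.symm⟩
    · right; exact Finset.mem_image.mpr ⟨b.natAbs, hnadvd, by rw [← hb]⟩
  -- Step 1: injection into F
  have step1 : (Nat.card {p : ℤ × ℤ × ℤ // p.1 * (t - p.1) - p.2.1 * p.2.2 = r ∧
        X / 2 ≤ |(p.1 : ℝ)| ∧ |(p.1 : ℝ)| ≤ X ∧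
        X / 2 ≤ |(p.2.1 : ℝ)| ∧ |(p.2.1 : ℝ)| ≤ X ∧
        X / 2 ≤ |(p.2.2 : ℝ)| ∧ |(p.2.2 : ℝ)| ≤ X}) ≤ F.card := by
    rw [← Nat.card_eq_finsetCard]
    refine Nat.card_le_card_of_injective
      (fun s => (⟨(s.1.1, s.1.2.1), hmem s.1 s.2⟩ : F)) ?_
    rintro ⟨⟨a, b, c⟩, h1⟩ ⟨⟨a', b', c'⟩, h2⟩ hee
    simp only [Subtype.mk.injEq, Prod.mk.injEq] at hee
    obtain ⟨rfl, rfl⟩ := hee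
    have hb0 : b ≠ 0 := by
      intro h0
      have := h1.2.2.2.1
      rw [h0] at this; simp at this; linarith
    have hcc : b * c = b * c' := by
      have e1 := h1.1; have e2 := h2.1
      simp only at e1 e2
      linarith
    have : c = c' := mul_left_cancel₀ hb0 hcc
    subst this
    rfl
  -- Step 2: bound F.card
  have step2 : (F.card : ℝ) ≤ ((Finset.Icc (-M) M).card : ℝ) * (2 * Cd * (T * X ^ 2) ^ (ε/2)) := by
    have h1 : F.card ≤ ∑ a ∈ Finset.Icc (-M) M, ({a} ×ˢ Dset (Na a)).card :=
      Finset.card_biUnion_le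
    have h2 : (F.card : ℝ) ≤ ∑ a ∈ Finset.Icc (-M) M, (({a} ×ˢ Dset (Na a)).card : ℝ) := by
      exact_mod_cast h1
    refine le_trans h2 (le_trans (Finset.sum_le_sum ?_)
      (by rw [Finset.sum_const, nsmul_eq_mul]))
    intro a ha
    have hcard : ({a} ×ˢ Dset (Na a)).card = (Dset (Na a)).card := by
      rw [Finset.card_product, Finset.card_singleton, one_mul]
    have hD : (Dset (Na a)).card ≤ 2 * (Na a).natAbs.divisors.card := by
      refine le_trans (Finset.card_union_le _ _) ?_
      have i1 := Finset.card_image_le (s := (Na a).natAbs.divisors) (f := fun d : ℕ => (d:ℤ))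
      have i2 := Finset.card_image_le (s := (Na a).natAbs.divisors) (f := fun d : ℕ => -(d:ℤ))
      omega
    -- size bound on Na a
    rw [Finset.mem_Icc] at ha
    have haX : |(a:ℝ)| ≤ X := by
      rw [abs_le]
      constructor
      · have : (-M : ℝ) ≤ (a : ℝ) := by exact_mod_cast ha.1
        linarith
      · have : (a : ℝ) ≤ (M : ℝ) := by exact_mod_cast ha.2
        linarith
    have hna : ((Na a).natAbs : ℝ) ≤ T * X ^ 2 := by
      have hcast : ((Na a).natAbs : ℝ) = |((Na a : ℤ) : ℝ)| := by
        rw [Nat.cast_natAbs, Int.cast_abs]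
      rw [hcast]
      have expand : ((Na a : ℤ) : ℝ) = (a:ℝ) * ((t:ℝ) - (a:ℝ)) - (r:ℝ) := by
        show ((a * (t - a) - r : ℤ) : ℝ) = _
        push_cast; ring
      rw [expand]
      have e1 : |(a:ℝ) * ((t:ℝ) - (a:ℝ)) - (r:ℝ)| ≤ |(a:ℝ)| * |(t:ℝ) - (a:ℝ)| + |(r:ℝ)| := by
        calc _ ≤ |(a:ℝ) * ((t:ℝ) - (a:ℝ))| + |(r:ℝ)| := abs_sub _ _
          _ = _ := by rw [abs_mul]
      have e2 : |(t:ℝ) - (a:ℝ)| ≤ |(t:ℝ)| + X := le_trans (abs_sub _ _) (by linarith)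
      have h0a : (0:ℝ) ≤ |(a:ℝ)| := abs_nonneg _
      have h0t : (0:ℝ) ≤ |(t:ℝ)| := abs_nonneg _
      have h0r : (0:ℝ) ≤ |(r:ℝ)| := abs_nonneg _
      rw [hT]
      have key : |(a:ℝ)| * |(t:ℝ) - (a:ℝ)| ≤ X * (|(t:ℝ)| + X) :=
        mul_le_mul haX e2 (abs_nonneg _) (le_of_lt hX0)
      have hXsq : X ≤ X ^ 2 := by nlinarith
      have ht2 : X * |(t:ℝ)| ≤ X ^ 2 * |(t:ℝ)| := mul_le_mul_of_nonneg_right hXsq h0t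
      have hr2 : |(r:ℝ)| ≤ X ^ 2 * |(r:ℝ)| := by nlinarith
      linarith
    have hdb := hCd (Na a).natAbs
    have hmono : ((Na a).natAbs : ℝ) ^ (ε/2) ≤ (T * X ^ 2) ^ (ε/2) :=
      Real.rpow_le_rpow (by positivity) hna (by positivity)
    calc (({a} ×ˢ Dset (Na a)).card : ℝ) = ((Dset (Na a)).card : ℝ) := by rw [hcard]
      _ ≤ 2 * ((Na a).natAbs.divisors.card : ℝ) := by exact_mod_cast hD
      _ ≤ 2 * (Cd * ((Na a).natAbs : ℝ) ^ (ε/2)) := by linarith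
      _ ≤ 2 * Cd * (T * X ^ 2) ^ (ε/2) := by
          rw [mul_assoc]
          refine mul_le_mul_of_nonneg_left ?_ (by norm_num)
          exact mul_le_mul_of_nonneg_left hmono (by linarith)
  -- Step 3: card of Icc
  have step3 : ((Finset.Icc (-M) M).card : ℝ) ≤ 3 * X := by
    rw [Int.card_Icc]
    have : (M + 1 - -M) = 2 * M + 1 := by ring
    rw [this]
    have hnn : (0:ℤ) ≤ 2 * M + 1 := by linarith
    rw [show (((2 * M + 1 : ℤ).toNat : ℕ) : ℝ) = ((2 * M + 1 : ℤ) : ℝ) by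
      exact_mod_cast congrArg (fun z : ℤ => (z : ℝ)) (Int.toNat_of_nonneg hnn)]
    push_cast
    linarith
  -- combine
  have hXε : (0:ℝ) ≤ X ^ (ε/2) := by positivity
  have hsplit : (T * X ^ 2) ^ (ε/2) = T ^ (ε/2) * X ^ ε := by
    rw [Real.mul_rpow (by linarith) (by positivity)]
    congr 1
    rw [← Real.rpow_natCast X 2, ← Real.rpow_mul (le_of_lt hX0)]
    congr 1
    push_cast
    ring
  have hXsum : X ^ (1 + ε) = X * X ^ ε := by
    rw [Real.rpow_add hX0, Real.rpow_one]
  have hstep1' : (Nat.card {p : ℤ × ℤ × ℤ // p.1 * (t - p.1) - p.2.1 * p.2.2 = r ∧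
        X / 2 ≤ |(p.1 : ℝ)| ∧ |(p.1 : ℝ)| ≤ X ∧
        X / 2 ≤ |(p.2.1 : ℝ)| ∧ |(p.2.1 : ℝ)| ≤ X ∧
        X / 2 ≤ |(p.2.2 : ℝ)| ∧ |(p.2.2 : ℝ)| ≤ X} : ℝ) ≤ (F.card : ℝ) := by
    exact_mod_cast step1
  have hfinal : ((Finset.Icc (-M) M).card : ℝ) * (2 * Cd * (T * X ^ 2) ^ (ε/2))
      ≤ 6 * Cd * T ^ (ε/2) * X ^ (1 + ε) := by
    rw [hsplit, hXsum]
    have hpos : (0:ℝ) ≤ 2 * Cd * (T ^ (ε/2) * X ^ ε) := by positivity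
    calc ((Finset.Icc (-M) M).card : ℝ) * (2 * Cd * (T ^ (ε/2) * X ^ ε))
        ≤ (3 * X) * (2 * Cd * (T ^ (ε/2) * X ^ ε)) := mul_le_mul_of_nonneg_right step3 hpos
      _ = 6 * Cd * T ^ (ε/2) * (X * X ^ ε) := by ring
  linarith [le_trans hstep1' step2]

theorem stmt9 (t r : ℤ) (h : ¬ ∃ s : ℤ, s ^ 2 = t ^ 2 - 4 * r) (ε : ℝ) (hε : 0 < ε) :
    ∃ C : ℝ, ∀ X : ℝ, 1 ≤ X →
      (Nat.card {p : ℤ × ℤ × ℤ // p.1 * (t - p.1) - p.2.1 * p.2.2 = r ∧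
        X / 2 ≤ |(p.1 : ℝ)| ∧ |(p.1 : ℝ)| ≤ X ∧
        X / 2 ≤ |(p.2.1 : ℝ)| ∧ |(p.2.1 : ℝ)| ≤ X ∧
        X / 2 ≤ |(p.2.2 : ℝ)| ∧ |(p.2.2 : ℝ)| ≤ X} : ℝ) ≤ C * X ^ (1 + ε) := by
  obtain ⟨Cd, hCd1, hCd⟩ := divisor_bound (ε / 2) (by positivity)
  exact stmt9_aux t r ε hε Cd hCd1 hCd
end

section
/- Let f : ℝ → ℂ be a Schwartz function, q a positive integer, and α an integer. Then Σ_{n ≡ α mod q} f(n) = (1/q) Σ_{m ∈ ℤ} e(αm/q) · f̂(m/q), where f̂(ξ) = ∫ f(x) e(−xξ) dx and e(x) = exp(2πix). -/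
open scoped Real

open MeasureTheory FourierTransform Complex

/-- `e(x) = exp(2πix)`. -/
noncomputable def e (x : ℝ) : ℂ := Complex.exp (2 * π * Complex.I * x)

/-- The Fourier transform with the `e(−xξ)` convention. -/
noncomputable def fourierHat (f : ℝ → ℂ) (ξ : ℝ) : ℂ := ∫ x : ℝ, f x * e (-(x * ξ))

theorem stmt17 (f : SchwartzMap ℝ ℂ) (q : ℕ) (hq : 0 < q) (α : ℤ) :
    ∑' n : ℤ, f ((α : ℝ) + (q : ℝ) * (n : ℝ)) =
      (1 / (q : ℂ)) * ∑' m : ℤ, e (((α * m : ℤ) : ℝ) / (q : ℝ)) * fourierHat f ((m : ℝ) / (q : ℝ)) := by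
  have hq' : (0:ℝ) < (q:ℝ) := by exact_mod_cast hq
  have hqne : (q:ℝ) ≠ 0 := hq'.ne'
  -- the dilation as a continuous linear equivalence
  let L : ℝ ≃L[ℝ] ℝ :=
    (LinearEquiv.smulOfNeZero ℝ ℝ (q:ℝ) hqne).toContinuousLinearEquiv
  let g : SchwartzMap ℝ ℂ := SchwartzMap.compCLMOfContinuousLinearEquiv ℝ L f
  have hg : ∀ x : ℝ, g x = f ((q:ℝ) * x) := fun x => rfl
  have key := SchwartzMap.tsum_eq_tsum_fourier g ((α:ℝ) / q)
  -- LHS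
  have hL : ∀ n : ℤ, g ((α:ℝ)/q + n) = f ((α : ℝ) + (q : ℝ) * (n : ℝ)) := by
    intro n
    rw [hg]
    congr 1
    field_simp
  -- Fourier transform of g
  have hF : ∀ m : ℤ, 𝓕 (⇑g) m = (1 / (q:ℂ)) * fourierHat f ((m:ℝ)/q) := by
    intro m
    rw [Real.fourier_real_eq_integral_exp_smul]
    have : ∀ x : ℝ, Complex.exp (↑(-2 * π * x * m) * Complex.I) • g x
        = (fun y : ℝ => Complex.exp (↑(-2 * π * y * (m / q : ℝ)) * Complex.I) • f y) ((q:ℝ) * x) := by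
      intro x
      have hx : (-2 * π * ((q:ℝ)*x) * ((m:ℝ)/(q:ℝ))) = -2 * π * x * (m:ℝ) := by
        field_simp
      simp only [hg, hx]
    simp_rw [this]
    rw [MeasureTheory.Measure.integral_comp_mul_left
      (fun y : ℝ => Complex.exp (↑(-2 * π * y * (m / q : ℝ)) * Complex.I) • f y) (q:ℝ)]
    rw [abs_of_pos (inv_pos.2 hq')]
    rw [fourierHat]
    rw [real_smul]
    congr 1
    · push_cast; ring
    · congr 1 with y
      rw [smul_eq_mul, mul_comm]
      congr 1
      unfold e
      congr 1
      push_cast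
      ring
  -- the fourier character value
  have hC : ∀ m : ℤ, (fourier m (((α:ℝ)/q : ℝ) : UnitAddCircle)) = e (((α * m : ℤ) : ℝ) / q) := by
    intro m
    rw [fourier_coe_apply]
    unfold e
    congr 1
    push_cast
    field_simp
  calc ∑' n : ℤ, f ((α : ℝ) + (q : ℝ) * (n : ℝ))
      = ∑' n : ℤ, g ((α:ℝ)/q + n) := by simp_rw [hL]
    _ = ∑' m : ℤ, 𝓕 (⇑g) m * fourier m (((α:ℝ)/q : ℝ) : UnitAddCircle) := by
        simpa [SchwartzMap.fourier_coe] using key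
    _ = ∑' m : ℤ, (1/(q:ℂ)) * (e (((α * m : ℤ) : ℝ) / q) * fourierHat f ((m:ℝ)/q)) := by
        congr 1 with m
        rw [hF, hC]
        ring
    _ = (1 / (q : ℂ)) * ∑' m : ℤ, e (((α * m : ℤ) : ℝ) / (q : ℝ)) * fourierHat f ((m : ℝ) / (q : ℝ)) := by
        rw [tsum_mul_left]
end
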